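/- Let π be a kernel on a finite set S that is weakly irreducible: for every x ≠ y in S, either there is a π-path from x to y or a π-path from y to x. Then the irreducibility classes of π can be labeled Γ_0, …, Γ_{m-1} in a unique way such that for every α ∈ {0,…,m-2} there exist i ∈ Γ_α and j ∈ Γ_{α+1} with π(i,j) > 0; moreover Γ_{m-1} is the unique recurrent class. -/

import Mathlib

/-- Reachability by a path of positive-rate jumps. -/
def kernelReach {S : Type*} (π : S → S → ℝ) : S → S → Prop :=
  Relation.ReflTransGen (fun a b => 0 < π a b)

/-- An irreducibility class of the kernel `π`. -/
def isIrredClass {S : Type*} (π : S → S → ℝ) (C : Set S) : Prop :=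
  ∃ x, C = {y | kernelReach π x y ∧ kernelReach π y x}

namespace WIC

variable {S : Type*} (π : S → S → ℝ)

def kset : Setoid S :=
  ⟨fun x y => kernelReach π x y ∧ kernelReach π y x,
   ⟨fun _ => ⟨.refl, .refl⟩, fun h => ⟨h.2, h.1⟩,
    fun h h' => ⟨h.1.trans h'.1, h'.2.trans h.2⟩⟩⟩

abbrev KQ := Quotient (kset π)

def kle : KQ π → KQ π → Prop :=
  Quotient.lift₂ (fun x y => kernelReach π x y) (by
    rintro a b a' b' ⟨haa', ha'a⟩ ⟨hbb', hb'b⟩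
    simp only [eq_iff_iff]
    exact ⟨fun h => ha'a.trans (h.trans hbb'), fun h => haa'.trans (h.trans hb'b)⟩)

lemma kle_mk (x y : S) : kle π ⟦x⟧ ⟦y⟧ ↔ kernelReach π x y := Iff.rfl

lemma kmk_eq (x y : S) :
    (Quotient.mk (kset π) x = Quotient.mk (kset π) y) ↔
      kernelReach π x y ∧ kernelReach π y x := by
  constructor
  · intro h; exact Quotient.exact h
  · intro h; exact Quotient.sound h

noncomputable def klin (hweak : ∀ x y : S, kernelReach π x y ∨ kernelReach π y x) :
    LinearOrder (KQ π) where
  le := kle π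
  le_refl := by rintro ⟨x⟩; exact Relation.ReflTransGen.refl
  le_trans := by rintro ⟨x⟩ ⟨y⟩ ⟨z⟩ h h'; exact Relation.ReflTransGen.trans h h'
  le_antisymm := by rintro ⟨x⟩ ⟨y⟩ h h'; exact Quotient.sound ⟨h, h'⟩
  le_total := by rintro ⟨x⟩ ⟨y⟩; exact hweak x y
  toDecidableLE := Classical.decRel _

end WIC

open WIC in
theorem weakly_irreducible_class_labeling
    {S : Type*} [Fintype S] [Nonempty S] (π : S → S → ℝ)
    (hπ : ∀ x y, 0 ≤ π x y)
    (hweak : ∀ x y : S, kernelReach π x y ∨ kernelReach π y x) :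
    ∃ m : ℕ, 0 < m ∧
      ∃! Γ : Fin m → Set S,
        (∀ α, isIrredClass π (Γ α)) ∧
        Function.Injective Γ ∧
        (∀ C : Set S, isIrredClass π C → ∃ α, Γ α = C) ∧
        (∀ α : Fin m, ∀ h : (α : ℕ) + 1 < m,
          ∃ i ∈ Γ α, ∃ j ∈ Γ ⟨(α : ℕ) + 1, h⟩, 0 < π i j) ∧
        (∀ α : Fin m,
          ((∀ i ∈ Γ α, ∀ j, 0 < π i j → j ∈ Γ α) ↔ (α : ℕ) = m - 1)) := by
  classical
  letI : LinearOrder (KQ π) := klin π hweak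
  haveI : Fintype (KQ π) := Quotient.fintype _
  set m := Fintype.card (KQ π) with hm
  haveI : Nonempty (KQ π) := Nonempty.map (Quotient.mk _) ‹Nonempty S›
  have hmpos : 0 < m := Fintype.card_pos
  let e : Fin m ≃o KQ π := monoEquivOfFin (KQ π) rfl
  -- basic facts
  have hle : ∀ x y : S, (Quotient.mk (kset π) x ≤ Quotient.mk (kset π) y) ↔ kernelReach π x y :=
    fun x y => Iff.rfl
  -- the candidate labeling
  let Γ : Fin m → Set S := fun α => {y | Quotient.mk (kset π) y = e α}
  have hΓmem : ∀ (α) (y : S), y ∈ Γ α ↔ Quotient.mk (kset π) y = e α := fun _ _ => Iff.rfl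
  -- description of irred classes
  have hclassdesc : ∀ (C : Set S), isIrredClass π C →
      ∀ x ∈ C, C = {y | Quotient.mk (kset π) y = Quotient.mk (kset π) x} := by
    rintro C ⟨z, rfl⟩ x hx
    ext y
    simp only [Set.mem_setOf_eq, kmk_eq]
    constructor
    · rintro ⟨hzy, hyz⟩
      exact ⟨hyz.trans hx.1, hx.2.trans hzy⟩
    · rintro ⟨hyx, hxy⟩
      exact ⟨hx.1.trans hxy, hyx.trans hx.2⟩
  have hΓclass : ∀ α, isIrredClass π (Γ α) := by
    intro α
    obtain ⟨x, hx⟩ := Quotient.exists_rep (e α)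
    refine ⟨x, ?_⟩
    ext y
    simp only [hΓmem, ← hx, Set.mem_setOf_eq, kmk_eq]
    exact ⟨fun h => ⟨h.2, h.1⟩, fun h => ⟨h.2, h.1⟩⟩
  -- nonemptiness of classes
  have hΓne : ∀ α, ∃ x, x ∈ Γ α := fun α => by
    obtain ⟨x, hx⟩ := Quotient.exists_rep (e α); exact ⟨x, hx⟩
  -- injectivity
  have hΓinj : Function.Injective Γ := by
    intro α β h
    obtain ⟨x, hx⟩ := hΓne α
    have hx' : x ∈ Γ β := h ▸ hx
    exact e.injective (((hΓmem α x).mp hx).symm.trans ((hΓmem β x).mp hx'))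
  -- surjectivity onto classes
  have hΓsurj : ∀ C, isIrredClass π C → ∃ α, Γ α = C := by
    intro C hC
    obtain ⟨z, hzdef⟩ := hC
    have hz : z ∈ C := by rw [hzdef]; exact ⟨.refl, .refl⟩
    refine ⟨e.symm (Quotient.mk (kset π) z), ?_⟩
    rw [hclassdesc C ⟨z, hzdef⟩ z hz]
    ext y
    rw [hΓmem, e.apply_symm_apply]
    exact Iff.rfl
  -- the key path lemma: an edge between successive classes
  have hsucc_edge : ∀ (q q' : KQ π), (∀ z : KQ π, z ≤ q ∨ q' ≤ z) → q < q' →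
      ∀ x y : S, kernelReach π x y → Quotient.mk (kset π) x = q →
        Quotient.mk (kset π) y = q' →
      ∃ i j : S, 0 < π i j ∧ Quotient.mk (kset π) i = q ∧ Quotient.mk (kset π) j = q' := by
    intro q q' hss hlt x y h
    induction h with
    | refl =>
      intro hx hy
      exact absurd (hx.symm.trans hy) hlt.ne
    | @tail b c hxb hbc ih =>
      intro hx hy
      rcases hss (Quotient.mk (kset π) b) with hb | hb
      · have h1 : q ≤ Quotient.mk (kset π) b := hx ▸ ((hle x b).mpr hxb)
        exact ⟨b, c, hbc, le_antisymm hb h1, hy⟩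
      · have h2 : Quotient.mk (kset π) b ≤ Quotient.mk (kset π) c :=
          (hle b c).mpr (Relation.ReflTransGen.single hbc)
        exact ih hx (le_antisymm (hy ▸ h2) hb)
  -- consecutive classes are linked by an edge
  have hcons : ∀ α : Fin m, ∀ h : (α : ℕ) + 1 < m,
      ∃ i ∈ Γ α, ∃ j ∈ Γ ⟨(α : ℕ) + 1, h⟩, 0 < π i j := by
    intro α h
    set β : Fin m := ⟨(α : ℕ) + 1, h⟩ with hβ
    have hαβ : α < β := by simp [hβ, Fin.lt_def]
    have hss : ∀ z : KQ π, z ≤ e α ∨ e β ≤ z := by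
      intro z
      rcases le_or_gt (e.symm z) α with h' | h'
      · left
        have := e.monotone h'
        rwa [e.apply_symm_apply] at this
      · right
        have h'' : β ≤ e.symm z := by
          rw [Fin.le_def]; rw [Fin.lt_def] at h'; simpa [hβ] using h'
        have := e.monotone h''
        rwa [e.apply_symm_apply] at this
    obtain ⟨x, hx⟩ := Quotient.exists_rep (e α)
    obtain ⟨y, hy⟩ := Quotient.exists_rep (e β)
    have hlt : e α < e β := e.strictMono hαβ
    have hxy : kernelReach π x y := by
      have : Quotient.mk (kset π) x ≤ Quotient.mk (kset π) y := by
        rw [hx, hy]; exact hlt.le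
      exact (hle x y).mp this
    obtain ⟨i, j, hij, hi, hj⟩ := hsucc_edge (e α) (e β) hss hlt x y hxy hx hy
    exact ⟨i, (hΓmem α i).mpr hi, j, (hΓmem β j).mpr hj, hij⟩
  -- recurrence characterization
  have hrec : ∀ α : Fin m,
      ((∀ i ∈ Γ α, ∀ j, 0 < π i j → j ∈ Γ α) ↔ (α : ℕ) = m - 1) := by
    intro α
    constructor
    · intro hcl
      by_contra hne
      have h : (α : ℕ) + 1 < m := by have := α.isLt; omega
      obtain ⟨i, hi, j, hj, hij⟩ := hcons α h
      have hj' : j ∈ Γ α := hcl i hi j hij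
      have : e α = e ⟨(α : ℕ) + 1, h⟩ :=
        ((hΓmem _ j).mp hj').symm.trans ((hΓmem _ j).mp hj)
      have := e.injective this
      simp [Fin.ext_iff] at this
    · intro htop i hi j hij
      have h1 : e α ≤ Quotient.mk (kset π) j :=
        ((hΓmem α i).mp hi) ▸ ((hle i j).mpr (Relation.ReflTransGen.single hij))
      have h2 : Quotient.mk (kset π) j ≤ e α := by
        have hle' : e.symm (Quotient.mk (kset π) j) ≤ α := by
          rw [Fin.le_def]
          have := (e.symm (Quotient.mk (kset π) j)).isLt
          omega
        have := e.monotone hle'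
        rwa [e.apply_symm_apply] at this
      exact (hΓmem α j).mpr (le_antisymm h2 h1)
  refine ⟨m, hmpos, Γ, ⟨hΓclass, hΓinj, hΓsurj, hcons, hrec⟩, ?_⟩
  rintro Γ' ⟨hcls', hinj', hsurj', hcons', -⟩
  -- representatives of the classes Γ' α
  have hrep : ∀ α, ∃ x, x ∈ Γ' α := by
    intro α
    obtain ⟨z, hz⟩ := hcls' α
    exact ⟨z, by rw [hz]; exact ⟨.refl, .refl⟩⟩
  choose rep hrepmem using hrep
  have hdesc' : ∀ α, Γ' α = {y | Quotient.mk (kset π) y = Quotient.mk (kset π) (rep α)} :=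
    fun α => hclassdesc (Γ' α) (hcls' α) (rep α) (hrepmem α)
  let g : Fin m → Fin m := fun α => e.symm (Quotient.mk (kset π) (rep α))
  have hkey : ∀ (α : Fin m) (h : (α : ℕ) + 1 < m), g α < g ⟨(α : ℕ) + 1, h⟩ := by
    intro α h
    obtain ⟨i, hi, j, hj, hij⟩ := hcons' α h
    rw [hdesc' α] at hi
    rw [hdesc' ⟨(α : ℕ) + 1, h⟩] at hj
    have hle' : Quotient.mk (kset π) (rep α) ≤ Quotient.mk (kset π) (rep ⟨(α : ℕ) + 1, h⟩) := by
      have := (hle i j).mpr (Relation.ReflTransGen.single hij)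
      rwa [Set.mem_setOf_eq.mp hi, Set.mem_setOf_eq.mp hj] at this
    have hne' : Quotient.mk (kset π) (rep α) ≠ Quotient.mk (kset π) (rep ⟨(α : ℕ) + 1, h⟩) := by
      intro hq
      have hΓeq : Γ' α = Γ' ⟨(α : ℕ) + 1, h⟩ := by
        rw [hdesc' α, hdesc' ⟨(α : ℕ) + 1, h⟩, hq]
      have := hinj' hΓeq
      simp [Fin.ext_iff] at this
    exact e.symm.strictMono (lt_of_le_of_ne hle' hne')
  have hg_strict : StrictMono g := by
    have step : ∀ (k : ℕ) (a b : Fin m), (b : ℕ) = (a : ℕ) + k + 1 → g a < g b := by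
      intro k
      induction k with
      | zero =>
        intro a b hb
        have h : (a : ℕ) + 1 < m := by have := b.isLt; omega
        have hval : ((⟨(a : ℕ) + 1, h⟩ : Fin m) : ℕ) = (a : ℕ) + 1 := rfl
        have hb' : b = ⟨(a : ℕ) + 1, h⟩ := Fin.ext (by omega)
        rw [hb']
        exact hkey a h
      | succ n ih =>
        intro a b hb
        have h : (a : ℕ) + 1 < m := by have := b.isLt; omega
        have hval : ((⟨(a : ℕ) + 1, h⟩ : Fin m) : ℕ) = (a : ℕ) + 1 := rfl
        exact (hkey a h).trans (ih ⟨(a : ℕ) + 1, h⟩ b (by omega))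
    intro a b hab
    rw [Fin.lt_def] at hab
    exact step ((b : ℕ) - (a : ℕ) - 1) a b (by omega)
  have hg_surj : Function.Surjective g := by
    intro β
    obtain ⟨α, hα⟩ := hsurj' (Γ β) (hΓclass β)
    refine ⟨α, ?_⟩
    have hmem : rep α ∈ Γ β := hα ▸ hrepmem α
    have : Quotient.mk (kset π) (rep α) = e β := (hΓmem β (rep α)).mp hmem
    simp only [g, this, e.symm_apply_apply]
  have hg_id : g = id := by
    haveI : WellFoundedLT (Fin m) := inferInstance
    exact (hg_strict.range_inj strictMono_id).mp
      (by rw [hg_surj.range_eq, Set.range_id])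
  funext α
  have hgα : g α = α := congrFun hg_id α
  have hrepα : Quotient.mk (kset π) (rep α) = e α := by
    have : e (g α) = e α := by rw [hgα]
    simpa only [g, e.apply_symm_apply] using this
  rw [hdesc' α, hrepα]
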